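/- arXiv:1205.5614 — 5 statements merged into one kernel-verified Lean document; each statement's English description precedes it below -/
import Mathlib

section
/- Let H₁ be a 1 × n_s complex matrix (a row vector), H₂ an n_d × 1 complex matrix (a column vector), and a ≥ 0 real. Then the largest eigenvalue of the n_s × n_s Hermitian matrix A = H₁ᴴ·H₂ᴴ·(a·H₂·H₂ᴴ + I)⁻¹·H₂·H₁ equals ‖H₁‖²·‖H₂‖² / (a·‖H₂‖² + 1), where ‖·‖² denotes the sum of the squared moduli of all entries (squared Frobenius norm). In particular, when q = min(n_d, n_r) = 1 with n_r = 1 the maximum eigenvalue of the equivalent channel matrix factors as λ_max = (h₁ᴴh₁)·(h₂ᴴh₂)/(a·h₂ᴴh₂ + 1). -/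
open Matrix

set_option maxHeartbeats 1000000 in
/-- For a `1 × n_s` row vector `H₁`, an `n_d × 1` column vector `H₂`
and `a ≥ 0`, the largest eigenvalue of `A = H₁ᴴ·H₂ᴴ·(a·H₂·H₂ᴴ + I)⁻¹·H₂·H₁` equals
`‖H₁‖²·‖H₂‖²/(a·‖H₂‖² + 1)` with `‖·‖²` the squared Frobenius norm. -/
theorem stmt9 {ns nd : ℕ} (H₁ : Matrix (Fin 1) (Fin ns) ℂ)
    (H₂ : Matrix (Fin nd) (Fin 1) ℂ) (a : ℝ) (ha : 0 ≤ a)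
    (A : Matrix (Fin ns) (Fin ns) ℂ)
    (hA : A = H₁ᴴ * H₂ᴴ * ((a : ℂ) • (H₂ * H₂ᴴ) + 1)⁻¹ * H₂ * H₁) :
    ∀ (h1 : A.IsHermitian),
      (⨆ i, h1.eigenvalues i)
        = (∑ i, ∑ j, ‖H₁ i j‖ ^ 2) * (∑ i, ∑ j, ‖H₂ i j‖ ^ 2)
            / (a * (∑ i, ∑ j, ‖H₂ i j‖ ^ 2) + 1) := by
  intro h1
  set c : ℝ := ∑ i, ∑ j, ‖H₂ i j‖ ^ 2 with hcdef
  set t : ℝ := ∑ i, ∑ j, ‖H₁ i j‖ ^ 2 with htdef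
  have hc0 : 0 ≤ c := by positivity
  have ht0 : 0 ≤ t := by positivity
  have hd : (0:ℝ) < a * c + 1 := by positivity
  have hdC : ((a:ℂ) * (c:ℂ) + 1) ≠ 0 := by
    have : (((a * c + 1 : ℝ)) : ℂ) ≠ 0 := Complex.ofReal_ne_zero.mpr hd.ne'
    push_cast at this; exact this
  set s : ℝ := t * c / (a * c + 1) with hsdef
  have hs0 : 0 ≤ s := div_nonneg (mul_nonneg ht0 hc0) hd.le
  -- 1×1 identities
  have hH2H2 : H₂ᴴ * H₂ = (c : ℂ) • (1 : Matrix (Fin 1) (Fin 1) ℂ) := by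
    ext i j
    fin_cases i; fin_cases j
    simp [Matrix.mul_apply, conjTranspose_apply, hcdef, Fin.sum_univ_one, Complex.sq_norm,
      Complex.normSq_eq_conj_mul_self]
  have hH1H1 : H₁ * H₁ᴴ = (t : ℂ) • (1 : Matrix (Fin 1) (Fin 1) ℂ) := by
    ext i j
    fin_cases i; fin_cases j
    simp [Matrix.mul_apply, conjTranspose_apply, htdef, Fin.sum_univ_one, Complex.sq_norm,
      Complex.normSq_eq_conj_mul_self, mul_comm]
  set P := H₂ * H₂ᴴ with hP
  have hPP : P * P = (c:ℂ) • P := by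
    rw [hP, Matrix.mul_assoc, ← Matrix.mul_assoc H₂ᴴ, hH2H2]
    rw [Matrix.smul_mul, Matrix.one_mul, Matrix.mul_smul]
  set b : ℂ := (a:ℂ)/((a:ℂ)*(c:ℂ)+1) with hb
  set k : ℂ := (c:ℂ)/((a:ℂ)*(c:ℂ)+1) with hk
  have hcoef : (a:ℂ) - (a:ℂ)*b*(c:ℂ) - b = 0 := by
    rw [hb]; field_simp; ring
  set N : Matrix (Fin nd) (Fin nd) ℂ := 1 - b • P with hN
  have hMN : ((a:ℂ) • P + 1) * N = 1 := by
    have h2 : ((a:ℂ)•P) * (b•P) = ((a:ℂ)*b*(c:ℂ))•P := by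
      rw [smul_mul_assoc, Matrix.mul_smul, hPP, smul_smul, smul_smul]
    rw [hN, mul_sub, mul_one, add_mul, one_mul, h2]
    have h3 : (a:ℂ)•P + 1 - (((a:ℂ)*b*(c:ℂ))•P + b•P)
        = 1 + ((a:ℂ) - (a:ℂ)*b*(c:ℂ) - b)•P := by
      rw [sub_smul, sub_smul]; abel
    rw [h3, hcoef, zero_smul, add_zero]
  have hMinv : ((a:ℂ) • P + 1)⁻¹ = N := inv_eq_right_inv hMN
  -- middle computation
  have hPmid : H₂ᴴ * P * H₂ = ((c:ℂ)*(c:ℂ)) • (1 : Matrix (Fin 1) (Fin 1) ℂ) := by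
    rw [hP]
    simp only [← Matrix.mul_assoc]
    rw [hH2H2, Matrix.smul_mul, Matrix.one_mul, Matrix.smul_mul, hH2H2, smul_smul]
  have hmid : H₂ᴴ * N * H₂ = k • (1 : Matrix (Fin 1) (Fin 1) ℂ) := by
    rw [hN, Matrix.mul_sub, Matrix.mul_one, Matrix.mul_smul, Matrix.sub_mul, Matrix.smul_mul,
      hPmid, hH2H2, smul_smul, ← sub_smul]
    congr 1
    rw [hb, hk]; generalize (c:ℂ) = x at hdC ⊢; generalize (a:ℂ) = y at hdC ⊢; linear_combination (-x) * mul_inv_cancel₀ hdC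
  have hAeq : A = k • (H₁ᴴ * H₁) := by
    rw [hA, hMinv]
    have h8 : H₁ᴴ * H₂ᴴ * N * H₂ * H₁ = H₁ᴴ * (H₂ᴴ * N * H₂) * H₁ := by
      simp only [Matrix.mul_assoc]
    rw [h8, hmid, Matrix.mul_smul, Matrix.mul_one, Matrix.smul_mul]
  have hsk : (s : ℂ) = (t:ℂ) * k := by rw [hsdef, hk]; push_cast; ring
  -- A * A = s • A
  have hAA : A * A = (s:ℂ) • A := by
    rw [hAeq, smul_mul_assoc, Matrix.mul_smul, Matrix.mul_assoc, ← Matrix.mul_assoc H₁,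
      hH1H1, Matrix.smul_mul, Matrix.one_mul, Matrix.mul_smul]
    rw [smul_smul, smul_smul, smul_smul, hsk]; ring_nf
  -- eigenvalue quadratic
  have hsm : ∀ (r : ℝ) (w : Fin ns → ℂ), r • w = (r:ℂ) • w := by
    intro r w; funext j; simp [Complex.real_smul]
  have hquad : ∀ i, h1.eigenvalues i = 0 ∨ h1.eigenvalues i = s := by
    intro i
    have hv := h1.mulVec_eigenvectorBasis i
    rw [hsm] at hv
    have hvne : ⇑(h1.eigenvectorBasis i) ≠ 0 :=
      fun h => h1.eigenvectorBasis.orthonormal.ne_zero i (by simpa using h)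
    have e1 : (A * A) *ᵥ ⇑(h1.eigenvectorBasis i)
        = ((h1.eigenvalues i : ℂ) * (h1.eigenvalues i : ℂ)) • ⇑(h1.eigenvectorBasis i) := by
      rw [← Matrix.mulVec_mulVec, hv, Matrix.mulVec_smul, hv, smul_smul]
    have e2 : (A * A) *ᵥ ⇑(h1.eigenvectorBasis i)
        = ((s:ℂ) * (h1.eigenvalues i : ℂ)) • ⇑(h1.eigenvectorBasis i) := by
      rw [hAA, Matrix.smul_mulVec, hv, smul_smul]
    have h4 : ((h1.eigenvalues i : ℂ) * (h1.eigenvalues i : ℂ))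
        = (s:ℂ) * (h1.eigenvalues i : ℂ) :=
      smul_left_injective ℂ hvne (e1.symm.trans e2)
    have h5 : h1.eigenvalues i * h1.eigenvalues i = s * h1.eigenvalues i := by exact_mod_cast h4
    have h6 : h1.eigenvalues i * (h1.eigenvalues i - s) = 0 := by linear_combination h5
    rcases mul_eq_zero.mp h6 with h | h
    · exact Or.inl h
    · exact Or.inr (by linarith)
  -- trace
  have htrace : ∑ i, h1.eigenvalues i = s := by
    have h6 : A.trace = (s : ℂ) := by
      rw [hAeq, Matrix.trace_smul]
      have h9 : (H₁ᴴ * H₁).trace = (t : ℂ) := by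
        rw [Matrix.trace_mul_comm, hH1H1, Matrix.trace_smul, Matrix.trace_one]
        simp
      rw [h9, hsk]
      simp [smul_eq_mul, mul_comm]
    have h7 : A.trace = ∑ i, ((h1.eigenvalues i : ℝ) : ℂ) := by
      exact h1.trace_eq_sum_eigenvalues
    rw [h6] at h7
    exact_mod_cast h7.symm
  -- conclude
  rcases Nat.eq_zero_or_pos ns with hns | hns
  · have hemp : IsEmpty (Fin ns) := by rw [hns]; exact Fin.isEmpty
    have ht0' : t = 0 := by
      rw [htdef]
      apply Finset.sum_eq_zero
      intro i _
      exact Finset.sum_of_isEmpty _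
    rw [Real.iSup_of_isEmpty, hsdef, ht0']
    ring
  · have hne : Nonempty (Fin ns) := ⟨⟨0, hns⟩⟩
    have hub : ∀ i, h1.eigenvalues i ≤ s := by
      intro i; rcases hquad i with h' | h' <;> simp [h', hs0]
    have hex : ∃ i, h1.eigenvalues i = s := by
      by_contra hcon
      push_neg at hcon
      have hall : ∀ i, h1.eigenvalues i = 0 := fun i => (hquad i).resolve_right (hcon i)
      have hs0' : s = 0 := by rw [← htrace]; simp [hall]
      obtain ⟨i⟩ := hne
      exact hcon i (by rw [hall i, hs0'])
    obtain ⟨i, hi⟩ := hex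
    have hfin : (⨆ i, h1.eigenvalues i) = s :=
      le_antisymm (ciSup_le hub) (hi ▸ le_ciSup (Set.Finite.bddAbove (Set.finite_range _)) i)
    rw [hfin, hsdef]
end

section
/- (Andréief/Chiani determinant integration identity.) Let q ≥ 1 be an integer, let b ∈ (0, ∞], and let φ₁, …, φ_q, ψ₁, …, ψ_q : ℝ → ℝ be measurable functions such that each product φᵢ·ψⱼ is Lebesgue integrable on the interval (0, b). Then the integral over the ordered region {x ∈ ℝ^q : 0 < x₁ < x₂ < ⋯ < x_q < b} of det[φᵢ(xⱼ)]_{i,j=1..q} · det[ψᵢ(xⱼ)]_{i,j=1..q} with respect to Lebesgue measure dx₁⋯dx_q equals det of the q × q matrix whose (i,j)-entry is ∫₀^b φᵢ(x)·ψⱼ(x) dx. -/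
open MeasureTheory

section Aux

open Equiv Finset

/-- A strictly monotone permutation of `Fin q` is the identity. -/
lemma perm_strictMono_eq_id {q : ℕ} (σ : Equiv.Perm (Fin q)) (h : StrictMono ⇑σ) :
    ∀ i, σ i = i := by
  intro i
  have hsymm : StrictMono ⇑σ.symm := by
    intro a b hab
    have := h.lt_iff_lt (a := σ.symm a) (b := σ.symm b)
    simpa using this.mp (by simpa using hab)
  haveI := Finite.to_wellFoundedLT (α := Fin q)
  refine le_antisymm ?_ h.le_apply
  have h1 : i ≤ σ.symm i := hsymm.le_apply
  have := h.monotone h1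
  simpa using this

lemma measurableSet_strictMono {q : ℕ} :
    MeasurableSet {x : Fin q → ℝ | StrictMono x} := by
  have : {x : Fin q → ℝ | StrictMono x}
      = ⋂ (i) (j) (_ : i < j), {x : Fin q → ℝ | x i < x j} := by
    ext x
    simp only [Set.mem_setOf_eq, Set.mem_iInter]
    exact ⟨fun hx i j hij => hx hij, fun hx a b hab => hx a b hab⟩
  rw [this]
  exact MeasurableSet.iInter fun i => MeasurableSet.iInter fun j =>
    MeasurableSet.iInter fun _ =>
      measurableSet_lt (measurable_pi_apply i) (measurable_pi_apply j)

/-- A "diagonal" `{x | x i = x j}` with `i ≠ j` is Lebesgue-null in `Fin q → ℝ`. -/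
lemma diag_null {q : ℕ} {i j : Fin q} (hij : i ≠ j) :
    (volume : Measure (Fin q → ℝ)) {x | x i = x j} = 0 := by
  classical
  set T := MeasurableEquiv.piEquivPiSubtypeProd (fun _ : Fin q => ℝ) (fun k => k ≠ j) with hT_def
  have hT : MeasurePreserving T volume volume :=
    volume_preserving_piEquivPiSubtypeProd (fun _ : Fin q => ℝ) (fun k => k ≠ j)
  set S' : Set ((({k : Fin q // k ≠ j}) → ℝ) × ({k : Fin q // ¬ k ≠ j} → ℝ)) :=
    {p | p.2 ⟨j, not_not_intro rfl⟩ = p.1 ⟨i, hij⟩} with hS'_def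
  have hm1 : Measurable fun p : (({k : Fin q // k ≠ j}) → ℝ) × ({k : Fin q // ¬ k ≠ j} → ℝ) =>
      p.2 ⟨j, not_not_intro rfl⟩ := by
    exact (measurable_pi_apply _).comp measurable_snd
  have hm2 : Measurable fun p : (({k : Fin q // k ≠ j}) → ℝ) × ({k : Fin q // ¬ k ≠ j} → ℝ) =>
      p.1 ⟨i, hij⟩ := by
    exact (measurable_pi_apply _).comp measurable_fst
  have hS' : MeasurableSet S' := measurableSet_eq_fun hm1 hm2
  have hpre : {x : Fin q → ℝ | x i = x j} = T ⁻¹' S' := by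
    ext x
    simp only [Set.mem_setOf_eq, Set.mem_preimage, hS'_def, hT_def,
      MeasurableEquiv.piEquivPiSubtypeProd, Equiv.piEquivPiSubtypeProd,
      MeasurableEquiv.coe_mk, Equiv.coe_fn_mk]
    exact eq_comm
  have hslice : ∀ u : {k : Fin q // k ≠ j} → ℝ,
      (volume : Measure ({k : Fin q // ¬ k ≠ j} → ℝ))
        {v | v ⟨j, not_not_intro rfl⟩ = u ⟨i, hij⟩} = 0 := by
    intro u
    rw [volume_pi]
    exact Measure.pi_hyperplane _ _ _
  have hprod : (volume : Measure ((({k : Fin q // k ≠ j}) → ℝ) × ({k : Fin q // ¬ k ≠ j} → ℝ))) S' = 0 := by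
    rw [Measure.volume_eq_prod, Measure.prod_apply hS']
    have : ∀ u : {k : Fin q // k ≠ j} → ℝ, (volume : Measure ({k : Fin q // ¬ k ≠ j} → ℝ))
        (Prod.mk u ⁻¹' S') = 0 := by
      intro u
      have : Prod.mk u ⁻¹' S' = {v : {k : Fin q // ¬ k ≠ j} → ℝ |
          v ⟨j, not_not_intro rfl⟩ = u ⟨i, hij⟩} := rfl
      rw [this]
      exact hslice u
    simp [this]
  calc (volume : Measure (Fin q → ℝ)) {x | x i = x j}
      = volume (T ⁻¹' S') := by rw [hpre]
    _ = Measure.map T volume S' := (Measure.map_apply hT.measurable hS').symm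
    _ = 0 := by rw [hT.map_eq]; exact hprod

/-- The general Andréief identity over all of `ℝ`. -/
lemma andreief {q : ℕ} (φ ψ : Fin q → ℝ → ℝ)
    (hint : ∀ i j, Integrable (fun t => φ i t * ψ j t)) :
    (∫ x in {x : Fin q → ℝ | StrictMono x},
        (Matrix.of fun i j => φ i (x j)).det * (Matrix.of fun i j => ψ i (x j)).det)
      = (Matrix.of fun i j => ∫ t, φ i t * ψ j t).det := by
  classical
  set F : (Fin q → ℝ) → ℝ := fun x =>
    (Matrix.of fun i j => φ i (x j)).det * (Matrix.of fun i j => ψ i (x j)).det with hF_def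
  set A : Matrix (Fin q) (Fin q) ℝ := Matrix.of fun i j => ∫ t, φ i t * ψ j t with hA_def
  -- expansion of F as a double sum over permutations
  have hFeq : ∀ x, F x = ∑ σ : Equiv.Perm (Fin q), ∑ τ : Equiv.Perm (Fin q),
      (((Equiv.Perm.sign σ : ℤ) : ℝ) * ((Equiv.Perm.sign τ : ℤ) : ℝ)) *
        ∏ j, (φ (σ j) (x j) * ψ (τ j) (x j)) := by
    intro x
    show (Matrix.of fun i j => φ i (x j)).det * (Matrix.of fun i j => ψ i (x j)).det = _
    rw [Matrix.det_apply', Matrix.det_apply', Finset.sum_mul_sum]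
    refine Finset.sum_congr rfl fun σ _ => Finset.sum_congr rfl fun τ _ => ?_
    rw [Finset.prod_mul_distrib]
    simp only [Matrix.of_apply]
    ring
  have hterm : ∀ σ τ : Equiv.Perm (Fin q),
      Integrable (fun x : Fin q → ℝ => ∏ j, (φ (σ j) (x j) * ψ (τ j) (x j))) :=
    fun σ τ => Integrable.fintype_prod (f := fun j t => φ (σ j) t * ψ (τ j) t)
      (fun j => hint (σ j) (τ j))
  have hsum_int : Integrable (fun x : Fin q → ℝ => ∑ σ : Equiv.Perm (Fin q),
      ∑ τ : Equiv.Perm (Fin q),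
      (((Equiv.Perm.sign σ : ℤ) : ℝ) * ((Equiv.Perm.sign τ : ℤ) : ℝ)) *
        ∏ j, (φ (σ j) (x j) * ψ (τ j) (x j))) :=
    integrable_finset_sum _ fun σ _ => integrable_finset_sum _ fun τ _ =>
      ((hterm σ τ).const_mul _)
  have hFint : Integrable F :=
    hsum_int.congr (Filter.Eventually.of_forall fun x => (hFeq x).symm)
  -- total integral via Fubini
  have htotal : ∫ x, F x = ∑ σ : Equiv.Perm (Fin q), ∑ τ : Equiv.Perm (Fin q),
      (((Equiv.Perm.sign σ : ℤ) : ℝ) * ((Equiv.Perm.sign τ : ℤ) : ℝ)) *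
        ∏ j, A (σ j) (τ j) := by
    rw [integral_congr_ae (Filter.Eventually.of_forall hFeq)]
    rw [integral_finset_sum _ (fun σ _ => integrable_finset_sum _ fun τ _ =>
      ((hterm σ τ).const_mul _))]
    refine Finset.sum_congr rfl fun σ _ => ?_
    rw [integral_finset_sum _ (fun τ _ => (hterm σ τ).const_mul _)]
    refine Finset.sum_congr rfl fun τ _ => ?_
    rw [integral_const_mul]
    congr 1
    exact integral_fintype_prod_eq_prod (ι := Fin q) (fun j t => φ (σ j) t * ψ (τ j) t)
  -- algebraic identity
  have halg : ∑ σ : Equiv.Perm (Fin q), ∑ τ : Equiv.Perm (Fin q),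
      (((Equiv.Perm.sign σ : ℤ) : ℝ) * ((Equiv.Perm.sign τ : ℤ) : ℝ)) *
        ∏ j, A (σ j) (τ j)
      = (Fintype.card (Equiv.Perm (Fin q)) : ℝ) * A.det := by
    rw [Finset.sum_comm]
    have hτ : ∀ τ : Equiv.Perm (Fin q), ∑ σ : Equiv.Perm (Fin q),
        (((Equiv.Perm.sign σ : ℤ) : ℝ) * ((Equiv.Perm.sign τ : ℤ) : ℝ)) *
          ∏ j, A (σ j) (τ j) = A.det := by
      intro τ
      rw [← Equiv.sum_comp (Equiv.mulRight τ) (fun σ => (((Equiv.Perm.sign σ : ℤ) : ℝ) *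
        ((Equiv.Perm.sign τ : ℤ) : ℝ)) * ∏ j, A (σ j) (τ j))]
      rw [Matrix.det_apply']
      refine Finset.sum_congr rfl fun π _ => ?_
      have h1 : ∏ j, A ((Equiv.mulRight τ π) j) (τ j) = ∏ j, A (π j) j := by
        rw [← Equiv.prod_comp τ (fun j => A (π j) j)]
        refine Finset.prod_congr rfl fun j _ => ?_
        simp [Equiv.Perm.mul_apply]
      rw [h1]
      have hsτ : ((Equiv.Perm.sign τ : ℤ) : ℝ) * ((Equiv.Perm.sign τ : ℤ) : ℝ) = 1 := by
        rcases Int.units_eq_one_or (Equiv.Perm.sign τ) with h | h <;> rw [h] <;> norm_num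
      have hmul : ((Equiv.Perm.sign (Equiv.mulRight τ π) : ℤ) : ℝ)
          = ((Equiv.Perm.sign π : ℤ) : ℝ) * ((Equiv.Perm.sign τ : ℤ) : ℝ) := by
        have hmr : Equiv.mulRight τ π = π * τ := rfl
        rw [hmr, Equiv.Perm.sign_mul]
        push_cast
        ring
      rw [hmul]
      linear_combination (((Equiv.Perm.sign π : ℤ) : ℝ) * ∏ i, A (π i) i) * hsτ
    simp only [hτ, Finset.sum_const, Finset.card_univ, nsmul_eq_mul]
  -- the strict-monotonicity sets
  set E : Equiv.Perm (Fin q) → Set (Fin q → ℝ) :=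
    fun σ => {x | StrictMono (x ∘ ⇑σ)} with hE_def
  have hEmeas : ∀ σ, MeasurableSet (E σ) := by
    intro σ
    have hmeas : Measurable (fun x : Fin q → ℝ => x ∘ ⇑σ) :=
      measurable_pi_lambda _ fun i => measurable_pi_apply (σ i)
    exact hmeas measurableSet_strictMono
  have hdisj : Pairwise (Function.onFun Disjoint E) := by
    intro σ τ hστ
    rw [Function.onFun, Set.disjoint_left]
    intro x hxσ hxτ
    apply hστ
    have hg : StrictMono (x ∘ ⇑σ) := hxσ
    have hg' : StrictMono (x ∘ ⇑τ) := hxτ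
    have hπ : StrictMono ⇑(σ⁻¹ * τ) := by
      intro a b hab
      have h1 : (x ∘ ⇑τ) a < (x ∘ ⇑τ) b := hg' hab
      have h2 : (x ∘ ⇑σ) ((σ⁻¹ * τ) a) < (x ∘ ⇑σ) ((σ⁻¹ * τ) b) := by
        simpa [Function.comp, Equiv.Perm.mul_apply] using h1
      exact hg.lt_iff_lt.mp h2
    have hid := perm_strictMono_eq_id _ hπ
    ext i
    have h0 := hid i
    simp only [Equiv.Perm.mul_apply] at h0
    have h3 := congrArg σ h0
    simp only [Equiv.Perm.inv_def, Equiv.apply_symm_apply] at h3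
    exact congrArg Fin.val h3.symm
  have hcover : {x : Fin q → ℝ | Function.Injective x} ⊆ ⋃ σ, E σ := by
    intro x hx
    refine Set.mem_iUnion.2 ⟨Tuple.sort x, ?_⟩
    exact (Tuple.monotone_sort x).strictMono_of_injective
      (hx.comp (Equiv.injective _))
  have hnull : (volume : Measure (Fin q → ℝ)) {x | ¬ Function.Injective x} = 0 := by
    have hsub : {x : Fin q → ℝ | ¬ Function.Injective x}
        ⊆ ⋃ (i) (j) (_ : i ≠ j), {x : Fin q → ℝ | x i = x j} := by
      intro x hx
      simp only [Set.mem_setOf_eq, Function.Injective, not_forall] at hx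
      obtain ⟨i, j, hxe, hne⟩ := hx
      exact Set.mem_iUnion.2 ⟨i, Set.mem_iUnion.2 ⟨j, Set.mem_iUnion.2 ⟨hne, hxe⟩⟩⟩
    refine measure_mono_null hsub ?_
    exact measure_iUnion_null fun i => measure_iUnion_null fun j =>
      measure_iUnion_null fun hij => diag_null hij
  -- split the integral
  have hsplit : ∫ x, F x = ∑ σ : Equiv.Perm (Fin q), ∫ x in E σ, F x := by
    have h0 : (volume : Measure (Fin q → ℝ)) (⋃ σ, E σ)ᶜ = 0 := by
      refine measure_mono_null ?_ hnull
      intro x hx hinj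
      exact hx (hcover hinj)
    have hbu : (⋃ σ, E σ) = ⋃ σ ∈ (Finset.univ : Finset (Equiv.Perm (Fin q))), E σ := by
      simp
    calc ∫ x, F x = ∫ x in Set.univ, F x := (setIntegral_univ (f := F)).symm
      _ = ∫ x in ⋃ σ, E σ, F x :=
          setIntegral_congr_set (ae_eq_univ.mpr h0).symm
      _ = ∑ σ : Equiv.Perm (Fin q), ∫ x in E σ, F x := by
          rw [hbu]
          exact integral_biUnion_finset Finset.univ (fun σ _ => hEmeas σ)
            (hdisj.set_pairwise _) (fun σ _ => hFint.integrableOn)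
  -- symmetry of F
  have hFsym : ∀ (π : Equiv.Perm (Fin q)) (x : Fin q → ℝ), F (x ∘ ⇑π) = F x := by
    intro π x
    have h1 : (Matrix.of fun i j => φ i ((x ∘ ⇑π) j))
        = (Matrix.of fun i j => φ i (x j)).submatrix id ⇑π := rfl
    have h2 : (Matrix.of fun i j => ψ i ((x ∘ ⇑π) j))
        = (Matrix.of fun i j => ψ i (x j)).submatrix id ⇑π := rfl
    have hs : ((Equiv.Perm.sign π : ℤ) : ℝ) * ((Equiv.Perm.sign π : ℤ) : ℝ) = 1 := by
      rcases Int.units_eq_one_or (Equiv.Perm.sign π) with h | h <;> rw [h] <;> norm_num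
    show (Matrix.of fun i j => φ i ((x ∘ ⇑π) j)).det *
      (Matrix.of fun i j => ψ i ((x ∘ ⇑π) j)).det = _
    simp only [h1, h2, Matrix.det_permute']
    push_cast
    calc (((Equiv.Perm.sign π : ℤ) : ℝ) * (Matrix.of fun i j => φ i (x j)).det) *
          (((Equiv.Perm.sign π : ℤ) : ℝ) * (Matrix.of fun i j => ψ i (x j)).det)
        = (((Equiv.Perm.sign π : ℤ) : ℝ) * ((Equiv.Perm.sign π : ℤ) : ℝ)) *
          ((Matrix.of fun i j => φ i (x j)).det * (Matrix.of fun i j => ψ i (x j)).det) := by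
          ring
      _ = (Matrix.of fun i j => φ i (x j)).det * (Matrix.of fun i j => ψ i (x j)).det := by
          rw [hs, one_mul]
  -- each piece has the same integral
  have hEσ : ∀ σ : Equiv.Perm (Fin q), ∫ x in E σ, F x = ∫ x in E 1, F x := by
    intro σ
    set e : Fin q ≃ Fin q := σ.symm with he_def
    set T := MeasurableEquiv.piCongrLeft (fun _ : Fin q => ℝ) e with hT_def
    have hT : MeasurePreserving T volume volume :=
      volume_measurePreserving_piCongrLeft (fun _ : Fin q => ℝ) e
    have hT_apply : ∀ x : Fin q → ℝ, T x = x ∘ ⇑e.symm := by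
      intro x
      funext j
      have hj : j = e (e.symm j) := (e.apply_symm_apply j).symm
      conv_lhs => rw [hj]
      rw [hT_def, MeasurableEquiv.coe_piCongrLeft]
      exact Equiv.piCongrLeft_apply_apply _ _ _ _
    have hpre : T ⁻¹' (E 1) = E σ := by
      ext x
      simp only [Set.mem_preimage, hE_def, Set.mem_setOf_eq, hT_apply]
      constructor
      · intro hx
        have : x ∘ ⇑e.symm ∘ ⇑(1 : Equiv.Perm (Fin q)) = x ∘ ⇑σ := by
          funext k; simp [he_def]
        rw [← this]
        intro a b hab
        exact hx hab
      · intro hx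
        intro a b hab
        have : (x ∘ ⇑σ) a < (x ∘ ⇑σ) b := hx hab
        simpa [he_def] using this
    calc ∫ x in E σ, F x = ∫ x in T ⁻¹' (E 1), F (T x) := by
          rw [hpre]
          refine setIntegral_congr_ae (hEmeas σ) ?_
          refine Filter.Eventually.of_forall fun x _ => ?_
          rw [hT_apply, hFsym]
      _ = ∫ x in E 1, F x :=
          hT.setIntegral_preimage_emb (MeasurableEquiv.measurableEmbedding T) F (E 1)
  -- assemble
  have h2 : ∫ x, F x = (Fintype.card (Equiv.Perm (Fin q)) : ℝ) * ∫ x in E 1, F x := by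
    rw [hsplit]
    simp only [hEσ, Finset.sum_const, Finset.card_univ, nsmul_eq_mul]
  have hcard : ((Fintype.card (Equiv.Perm (Fin q)) : ℝ)) ≠ 0 := by
    exact_mod_cast Fintype.card_pos.ne'
  have hmain : ∫ x in E 1, F x = A.det := by
    apply mul_left_cancel₀ hcard
    rw [← h2, htotal, halg]
  have hE1 : E 1 = {x : Fin q → ℝ | StrictMono x} := by
    ext x
    simp [hE_def]
  rw [← hE1]
  exact hmain

end Aux

/-- Andréief/Chiani determinant integration identity: for
measurable `φᵢ, ψᵢ : ℝ → ℝ` with each product `φᵢ·ψⱼ` integrable on `(0, b)`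
(`b ∈ (0, ∞]`), the integral of `det[φᵢ(xⱼ)]·det[ψᵢ(xⱼ)]` over the ordered region
`0 < x₁ < ⋯ < x_q < b` equals `det[∫₀^b φᵢ(x)ψⱼ(x) dx]`. -/
theorem stmt10 (q : ℕ) (hq : 1 ≤ q) (b : EReal) (hb : 0 < b)
    (φ ψ : Fin q → ℝ → ℝ)
    (hφ : ∀ i, Measurable (φ i)) (hψ : ∀ i, Measurable (ψ i))
    (hint : ∀ i j, IntegrableOn (fun t => φ i t * ψ j t)
      {t : ℝ | 0 < t ∧ (t : EReal) < b}) :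
    (∫ x in {x : Fin q → ℝ | (∀ i, 0 < x i ∧ ((x i : ℝ) : EReal) < b) ∧ StrictMono x},
        (Matrix.of fun i j => φ i (x j)).det * (Matrix.of fun i j => ψ i (x j)).det)
      = (Matrix.of fun i j =>
          ∫ t in {t : ℝ | 0 < t ∧ (t : EReal) < b}, φ i t * ψ j t).det := by
  classical
  set s : Set ℝ := {t : ℝ | 0 < t ∧ (t : EReal) < b} with hs_def
  have hs : MeasurableSet s := by
    have : s = {t : ℝ | 0 < t} ∩ {t : ℝ | (t : EReal) < b} := rfl
    rw [this]
    exact (measurableSet_lt measurable_const measurable_id).inter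
      (measurableSet_lt measurable_coe_real_ereal measurable_const)
  set φ' : Fin q → ℝ → ℝ := fun i => s.indicator (φ i) with hφ'_def
  have hprod : ∀ i j, (fun t => φ' i t * ψ j t)
      = s.indicator (fun t => φ i t * ψ j t) := by
    intro i j
    funext t
    by_cases ht : t ∈ s
    · simp [hφ'_def, Set.indicator_of_mem ht]
    · simp [hφ'_def, Set.indicator_of_notMem ht]
  have hint' : ∀ i j, Integrable (fun t => φ' i t * ψ j t) := by
    intro i j
    rw [hprod]
    exact (integrable_indicator_iff hs).2 (hint i j)
  have key := andreief φ' ψ hint'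
  -- rhs matches
  have hrhs : (Matrix.of fun i j => ∫ t, φ' i t * ψ j t)
      = (Matrix.of fun i j => ∫ t in s, φ i t * ψ j t) := by
    ext i j
    simp only [Matrix.of_apply]
    rw [show (fun t => φ' i t * ψ j t) = s.indicator (fun t => φ i t * ψ j t) from hprod i j]
    exact integral_indicator hs
  -- lhs matches
  set box : Set (Fin q → ℝ) := {x | ∀ i, x i ∈ s} with hbox_def
  have hboxmeas : MeasurableSet box := by
    have : box = ⋂ i, (fun x : Fin q → ℝ => x i) ⁻¹' s := by
      ext x; simp [hbox_def]
    rw [this]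
    exact MeasurableSet.iInter fun i => (measurable_pi_apply i) hs
  set d : ℝ → ℝ := fun t => if t ∈ s then 1 else 0 with hd_def
  have hφ'mat : ∀ x : Fin q → ℝ, (Matrix.of fun i j => φ' i (x j)).det
      = (∏ j, d (x j)) * (Matrix.of fun i j => φ i (x j)).det := by
    intro x
    have : (Matrix.of fun i j => φ' i (x j))
        = Matrix.of fun i j => d (x j) * (Matrix.of fun i j => φ i (x j)) i j := by
      ext i j
      simp only [Matrix.of_apply, hφ'_def, hd_def, Set.indicator_apply]
      by_cases h : x j ∈ s <;> simp [h]
    rw [this, Matrix.det_mul_row]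
  have hindic : ∀ x : Fin q → ℝ, (∏ j, d (x j))
      = box.indicator (fun _ => (1:ℝ)) x := by
    intro x
    by_cases hx : x ∈ box
    · rw [Set.indicator_of_mem hx]
      exact Finset.prod_eq_one fun j _ => if_pos (hx j)
    · rw [Set.indicator_of_notMem hx]
      simp only [hbox_def, Set.mem_setOf_eq, not_forall] at hx
      obtain ⟨j, hj⟩ := hx
      exact Finset.prod_eq_zero (Finset.mem_univ j) (if_neg hj)
  have hlhs : (∫ x in {x : Fin q → ℝ | StrictMono x},
        (Matrix.of fun i j => φ' i (x j)).det * (Matrix.of fun i j => ψ i (x j)).det)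
      = ∫ x in {x : Fin q → ℝ | StrictMono x} ∩ box,
        (Matrix.of fun i j => φ i (x j)).det * (Matrix.of fun i j => ψ i (x j)).det := by
    rw [← setIntegral_indicator hboxmeas]
    refine setIntegral_congr_ae measurableSet_strictMono ?_
    refine Filter.Eventually.of_forall fun x _ => ?_
    rw [hφ'mat, hindic]
    by_cases hx : x ∈ box
    · simp [Set.indicator_of_mem hx]
    · simp [Set.indicator_of_notMem hx]
  have hset : {x : Fin q → ℝ | (∀ i, 0 < x i ∧ ((x i : ℝ) : EReal) < b) ∧ StrictMono x}
      = {x : Fin q → ℝ | StrictMono x} ∩ box := by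
    ext x
    simp only [Set.mem_setOf_eq, Set.mem_inter_iff, hbox_def, hs_def]
    exact ⟨fun h => ⟨h.2, h.1⟩, fun h => ⟨h.2, h.1⟩⟩
  rw [hset, ← hlhs, key, hrhs]
end

section
/- For every real a > 0 and all natural numbers m and n: ∫₀^{1/a} β^m · e^{-β/(1 - a·β)} · (1 - a·β)^{-(m + n + 2)} dβ = Σ_{k=0}^{n} C(n, k) · a^k · (m + k)!, where C(n, k) is the binomial coefficient. (Obtained by the substitution y = β/(1 − a·β), which maps (0, 1/a) onto (0, ∞) and reduces the integral to ∫₀^∞ y^m (1 + a·y)^n e^{-y} dy.) -/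
open MeasureTheory Set

lemma pow_exp_integrableOn (p : ℕ) :
    IntegrableOn (fun y : ℝ => y ^ p * Real.exp (-y)) (Ioi 0) := by
  have h := Real.GammaIntegral_convergent (s := (p : ℝ) + 1) (by positivity)
  refine (h.congr_fun (fun x hx => ?_) measurableSet_Ioi)
  have hx0 : (0:ℝ) < x := hx
  rw [add_sub_cancel_right]
  beta_reduce
  rw [Real.rpow_natCast]
  ring

lemma pow_exp_integral (p : ℕ) :
    ∫ y in Ioi (0:ℝ), y ^ p * Real.exp (-y) = (Nat.factorial p : ℝ) := by
  have h := Real.integral_rpow_mul_exp_neg_mul_Ioi (a := (p : ℝ) + 1) (r := 1)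
    (by positivity) one_pos
  rw [one_div_one, Real.one_rpow, one_mul] at h
  rw [← Real.Gamma_nat_eq_factorial, ← h]
  refine setIntegral_congr_fun measurableSet_Ioi (fun x hx => ?_)
  have hx0 : (0:ℝ) < x := hx
  rw [add_sub_cancel_right, Real.rpow_natCast, one_mul]

theorem stmt12 (a : ℝ) (ha : 0 < a) (m n : ℕ) :
    (∫ β in Set.Ioo (0 : ℝ) (1 / a),
        β ^ m * Real.exp (-β / (1 - a * β)) * ((1 - a * β) ^ (m + n + 2))⁻¹)
      = ∑ k ∈ Finset.range (n + 1),
          (n.choose k : ℝ) * a ^ k * (Nat.factorial (m + k) : ℝ) := by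
  set f : ℝ → ℝ := fun y => y / (1 + a * y) with hf
  have hden : ∀ y : ℝ, 0 < y → 0 < 1 + a * y := fun y hy => by positivity
  have himg : f '' Ioi 0 = Ioo (0:ℝ) (1 / a) := by
    ext β
    constructor
    · rintro ⟨y, hy, rfl⟩
      have hy0 : (0:ℝ) < y := hy
      have hd := hden y hy0
      constructor
      · exact div_pos hy0 hd
      · rw [div_lt_div_iff₀ hd ha]
        nlinarith
    · rintro ⟨hβ0, hβ1⟩
      have h1 : 0 < 1 - a * β := by
        have := (lt_div_iff₀ ha).mp hβ1
        linarith
      refine ⟨β / (1 - a * β), div_pos hβ0 h1, ?_⟩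
      have h2 : 1 + a * (β / (1 - a * β)) = 1 / (1 - a * β) := by
        field_simp
        ring
      simp only [hf, h2]
      field_simp
      rw [mul_comm β a]
      exact div_self h1.ne'
  have hinj : InjOn f (Ioi 0) := by
    intro x hx y hy hxy
    have hdx := hden x hx
    have hdy := hden y hy
    rw [hf] at hxy
    field_simp at hxy
    rw [div_eq_iff (by linarith [mul_comm x a])] at hxy
    nlinarith
  have hderiv : ∀ y ∈ Ioi (0:ℝ),
      HasDerivWithinAt f (((1 + a * y) ^ 2)⁻¹) (Ioi 0) y := by
    intro y hy
    have hd := (hden y hy).ne'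
    have h1 : HasDerivAt (fun y : ℝ => 1 + a * y) a y := by
      simpa using ((hasDerivAt_id y).const_mul a).const_add 1
    have h2 : HasDerivAt f ((1 * (1 + a * y) - y * a) / (1 + a * y) ^ 2) y :=
      (hasDerivAt_id y).div h1 hd
    have h3 : (1 * (1 + a * y) - y * a) / (1 + a * y) ^ 2 = ((1 + a * y) ^ 2)⁻¹ := by
      field_simp
      ring
    rw [h3] at h2
    exact h2.hasDerivWithinAt
  have key := integral_image_eq_integral_abs_deriv_smul measurableSet_Ioi hderiv hinj
    (fun β => β ^ m * Real.exp (-β / (1 - a * β)) * ((1 - a * β) ^ (m + n + 2))⁻¹)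
  rw [himg] at key
  rw [key]
  have hcong : ∀ y ∈ Ioi (0:ℝ),
      |((1 + a * y) ^ 2)⁻¹| • (f y ^ m * Real.exp (-f y / (1 - a * f y)) *
        ((1 - a * f y) ^ (m + n + 2))⁻¹)
      = ∑ k ∈ Finset.range (n + 1),
          (n.choose k : ℝ) * a ^ k * (y ^ (m + k) * Real.exp (-y)) := by
    intro y hy
    have hy0 : (0:ℝ) < y := hy
    have hd := hden y hy0
    have h1 : 1 - a * f y = (1 + a * y)⁻¹ := by
      rw [hf]; field_simp
      ring
    have h2 : -f y / (1 - a * f y) = -y := by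
      rw [h1, hf]
      field_simp
    rw [h2, h1, hf]
    rw [smul_eq_mul, abs_of_pos (by positivity)]
    rw [div_pow, inv_pow, inv_inv]
    have h3 : (1 + a * y) ^ (m + n + 2) = (1 + a * y) ^ m * (1 + a * y) ^ n * (1 + a * y) ^ 2 := by
      rw [← pow_add, ← pow_add]
    have h4 : (1 + a * y) ^ n = ∑ k ∈ Finset.range (n + 1), (n.choose k : ℝ) * (a * y) ^ k := by
      rw [add_comm]
      rw [add_pow]
      simp [mul_comm]
    have hdm : (1 + a * y) ^ m ≠ 0 := by positivity
    have hd2 : (1 + a * y) ^ 2 ≠ 0 := by positivity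
    rw [h3, h4]
    simp only [Finset.mul_sum, Finset.sum_mul]
    refine Finset.sum_congr rfl (fun k _ => ?_)
    rw [mul_pow, pow_add]
    field_simp
  have keq : (∫ x in Ioi (0:ℝ),
      |((1 + a * x) ^ 2)⁻¹| • (f x ^ m * Real.exp (-f x / (1 - a * f x)) *
        ((1 - a * f x) ^ (m + n + 2))⁻¹))
      = ∫ x in Ioi (0:ℝ), ∑ k ∈ Finset.range (n + 1),
          (n.choose k : ℝ) * a ^ k * (x ^ (m + k) * Real.exp (-x)) :=
    setIntegral_congr_fun measurableSet_Ioi hcong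
  rw [keq]
  rw [integral_finset_sum _ (fun k _ => ((pow_exp_integrableOn (m + k)).const_mul _))]
  refine Finset.sum_congr rfl (fun k _ => ?_)
  rw [MeasureTheory.integral_const_mul, pow_exp_integral]
end

section
/- (High SNR slope S_∞ = 1/2.) Let (Ω, P) be a probability space and let λ : Ω → ℝ be a random variable with λ > 0 almost surely and ω ↦ log λ(ω) integrable, and let a > 0 be a real constant. Then lim_{ρ → ∞} (∫_Ω log(1 + a·ρ·λ(ω)) dP(ω)) / (log ρ) = 1. Consequently, the ergodic capacity C(ρ) = (1/2)·E[log₂(1 + a·ρ·λ)] satisfies lim_{ρ→∞} C(ρ)/log₂ ρ = 1/2, i.e., the high-SNR slope is S_∞ = 1/2. -/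
open MeasureTheory Filter

/-- High SNR slope `S_∞ = 1/2`: if `l > 0` a.s. with `log l`
integrable and `a > 0`, then `(∫ log(1 + a·ρ·l) dP)/log ρ → 1` as `ρ → ∞`;
consequently the ergodic capacity `C(ρ) = (1/2)·E[log₂(1 + a·ρ·l)]` satisfies
`C(ρ)/log₂ ρ → 1/2`. -/
theorem stmt15 {Ω : Type*} [MeasureSpace Ω]
    [IsProbabilityMeasure (volume : Measure Ω)]
    (l : Ω → ℝ) (hpos : ∀ᵐ ω ∂(volume : Measure Ω), 0 < l ω)
    (hint : Integrable (fun ω => Real.log (l ω)))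
    (a : ℝ) (ha : 0 < a) :
    Tendsto (fun ρ : ℝ => (∫ ω, Real.log (1 + a * ρ * l ω)) / Real.log ρ)
      atTop (nhds 1) ∧
    Tendsto (fun ρ : ℝ =>
        ((1 / 2) * ∫ ω, Real.logb 2 (1 + a * ρ * l ω)) / Real.logb 2 ρ)
      atTop (nhds (1 / 2)) := by
  -- measurability of l
  have hl : AEMeasurable l := by
    have h1 : AEMeasurable (fun ω => Real.exp (Real.log (l ω))) :=
      Real.measurable_exp.comp_aemeasurable hint.aestronglyMeasurable.aemeasurable
    refine h1.congr ?_
    filter_upwards [hpos] with ω hω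
    simp [Real.exp_log hω]
  -- integrability of log (1 + l)
  have hint1 : Integrable (fun ω => Real.log (1 + l ω)) := by
    refine Integrable.mono' ((integrable_const (Real.log 2)).add hint.abs)
      ((Real.measurable_log.comp_aemeasurable
        ((hl.const_mul 1).const_add 1)).aestronglyMeasurable.congr ?_) ?_
    · filter_upwards with ω; simp
    · filter_upwards [hpos] with ω hω
      simp only [Pi.add_apply]
      have h0 : (0:ℝ) ≤ Real.log (1 + l ω) := Real.log_nonneg (by linarith)
      rw [Real.norm_eq_abs, abs_of_nonneg h0]
      rcases le_or_gt (l ω) 1 with h | h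
      · have : Real.log (1 + l ω) ≤ Real.log 2 :=
          Real.log_le_log (by linarith) (by linarith)
        have := abs_nonneg (Real.log (l ω)); linarith
      · have h1 : Real.log (1 + l ω) ≤ Real.log (2 * l ω) :=
          Real.log_le_log (by linarith) (by linarith)
        rw [Real.log_mul two_ne_zero (by positivity)] at h1
        have : Real.log (l ω) ≤ |Real.log (l ω)| := le_abs_self _
        linarith
  set I := ∫ ω, Real.log (l ω) with hI
  set J := ∫ ω, Real.log (1 + l ω) with hJ
  have key : ∀ ρ : ℝ, 1 ≤ ρ →
      Real.log a + Real.log ρ + I ≤ (∫ ω, Real.log (1 + a * ρ * l ω)) ∧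
      (∫ ω, Real.log (1 + a * ρ * l ω)) ≤ Real.log (1 + a) + Real.log ρ + J := by
    intro ρ hρ
    have hρ0 : (0:ℝ) < ρ := by linarith
    have hmeas : AEStronglyMeasurable (fun ω => Real.log (1 + a * ρ * l ω)) volume :=
      (Real.measurable_log.comp_aemeasurable
        ((hl.const_mul (a * ρ)).const_add 1)).aestronglyMeasurable
    have hlow : ∀ᵐ ω ∂(volume : Measure Ω),
        Real.log a + Real.log ρ + Real.log (l ω) ≤ Real.log (1 + a * ρ * l ω) := by
      filter_upwards [hpos] with ω hω
      have h1 : Real.log (a * ρ * l ω) ≤ Real.log (1 + a * ρ * l ω) :=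
        Real.log_le_log (by positivity) (by nlinarith)
      rw [Real.log_mul (by positivity) hω.ne', Real.log_mul ha.ne' hρ0.ne'] at h1
      linarith
    have hhigh : ∀ᵐ ω ∂(volume : Measure Ω),
        Real.log (1 + a * ρ * l ω) ≤ Real.log (1 + a) + Real.log ρ + Real.log (1 + l ω) := by
      filter_upwards [hpos] with ω hω
      have h1 : Real.log (1 + a * ρ * l ω) ≤ Real.log ((1 + a) * ρ * (1 + l ω)) :=
        Real.log_le_log (by nlinarith [mul_pos (mul_pos ha hρ0) hω])
          (by nlinarith [mul_pos hρ0 hω, mul_pos ha hρ0, mul_pos (mul_pos ha hρ0) hω])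
      rw [Real.log_mul (by positivity) (by positivity),
        Real.log_mul (by positivity) hρ0.ne'] at h1
      linarith
    have hglow : Integrable (fun ω => Real.log a + Real.log ρ + Real.log (l ω)) :=
      (integrable_const (Real.log a + Real.log ρ)).add hint
    have hghigh : Integrable
        (fun ω => Real.log (1 + a) + Real.log ρ + Real.log (1 + l ω)) :=
      (integrable_const (Real.log (1 + a) + Real.log ρ)).add hint1
    have hfint : Integrable (fun ω => Real.log (1 + a * ρ * l ω)) := by
      refine hghigh.mono' hmeas ?_
      filter_upwards [hpos, hhigh] with ω hω hb
      have h0 : (0:ℝ) ≤ Real.log (1 + a * ρ * l ω) :=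
        Real.log_nonneg (by nlinarith [mul_pos (mul_pos ha hρ0) hω])
      rw [Real.norm_eq_abs, abs_of_nonneg h0]; exact hb
    constructor
    · have := integral_mono_ae hglow hfint hlow
      rwa [integral_add (integrable_const _) hint, integral_const,
        probReal_univ, one_smul] at this
    · have := integral_mono_ae hfint hghigh hhigh
      rwa [integral_add (integrable_const _) hint1, integral_const,
        probReal_univ, one_smul] at this
  -- auxiliary limit
  have haux : ∀ c d : ℝ,
      Tendsto (fun ρ : ℝ => (c + Real.log ρ + d) / Real.log ρ) atTop (nhds 1) := by
    intro c d
    have h1 : Tendsto (fun ρ : ℝ => (c + d) / Real.log ρ + 1) atTop (nhds (0 + 1)) :=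
      (Tendsto.div_atTop tendsto_const_nhds Real.tendsto_log_atTop).add tendsto_const_nhds
    rw [zero_add] at h1
    refine h1.congr' ?_
    filter_upwards [eventually_gt_atTop (1:ℝ)] with ρ hρ
    have hlρ : Real.log ρ ≠ 0 := (Real.log_pos hρ).ne'
    field_simp
    ring
  have main : Tendsto (fun ρ : ℝ => (∫ ω, Real.log (1 + a * ρ * l ω)) / Real.log ρ)
      atTop (nhds 1) := by
    refine tendsto_of_tendsto_of_tendsto_of_le_of_le'
      (haux (Real.log a) I) (haux (Real.log (1 + a)) J) ?_ ?_
    · filter_upwards [eventually_gt_atTop (1:ℝ)] with ρ hρ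
      exact div_le_div_of_nonneg_right ((key ρ hρ.le).1) (Real.log_pos hρ).le
    · filter_upwards [eventually_gt_atTop (1:ℝ)] with ρ hρ
      exact div_le_div_of_nonneg_right ((key ρ hρ.le).2) (Real.log_pos hρ).le
  refine ⟨main, ?_⟩
  have h2 : Real.log 2 ≠ 0 := by
    have := Real.log_pos (by norm_num : (1:ℝ) < 2); exact this.ne'
  have heq : ∀ᶠ ρ : ℝ in atTop,
      (1 / 2) * ((∫ ω, Real.log (1 + a * ρ * l ω)) / Real.log ρ) =
      ((1 / 2) * ∫ ω, Real.logb 2 (1 + a * ρ * l ω)) / Real.logb 2 ρ := by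
    filter_upwards [eventually_gt_atTop (1:ℝ)] with ρ hρ
    have hlρ : Real.log ρ ≠ 0 := (Real.log_pos hρ).ne'
    have : (∫ ω, Real.logb 2 (1 + a * ρ * l ω)) =
        (∫ ω, Real.log (1 + a * ρ * l ω)) / Real.log 2 := by
      simp only [Real.logb]
      exact integral_div _ _
    rw [this, Real.logb]
    field_simp
  have := main.const_mul (1/2 : ℝ)
  rw [mul_one] at this
  exact Tendsto.congr' heq this
end

section
/- (High SNR power offset.) Let (Ω, P) be a probability space and let λ : Ω → ℝ be a random variable with λ > 0 almost surely and ω ↦ log λ(ω) integrable. Then lim_{ρ → ∞} ( ∫_Ω log(1 + ρ·λ(ω)) dP(ω) − log ρ ) = ∫_Ω log λ(ω) dP(ω). Consequently, for fixed a > 0 the ergodic capacity C(ρ) = (1/2)·E[log₂(1 + a·ρ·λ)] has high-SNR power offset L_∞ = lim_{ρ→∞}(log₂ ρ − C(ρ)/S_∞) = −E[log₂(a·λ)] with S_∞ = 1/2. -/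
open MeasureTheory Filter

/-- High SNR power offset: if `l > 0` a.s. with `log l` integrable,
then `∫ log(1 + ρ·l) dP − log ρ → ∫ log l dP` as `ρ → ∞`; consequently for `a > 0`
the ergodic capacity `C(ρ) = (1/2)·E[log₂(1 + a·ρ·l)]` has high-SNR power offset
`L_∞ = lim (log₂ ρ − C(ρ)/(1/2)) = −E[log₂(a·l)]`. -/
theorem stmt16 {Ω : Type*} [MeasureSpace Ω]
    [IsProbabilityMeasure (volume : Measure Ω)]
    (l : Ω → ℝ) (hpos : ∀ᵐ ω ∂(volume : Measure Ω), 0 < l ω)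
    (hint : Integrable (fun ω => Real.log (l ω))) :
    Tendsto (fun ρ : ℝ => (∫ ω, Real.log (1 + ρ * l ω)) - Real.log ρ)
      atTop (nhds (∫ ω, Real.log (l ω))) ∧
    ∀ a : ℝ, 0 < a →
      Tendsto (fun ρ : ℝ =>
          Real.logb 2 ρ - ((1 / 2) * ∫ ω, Real.logb 2 (1 + a * ρ * l ω)) / (1 / 2))
        atTop (nhds (-(∫ ω, Real.logb 2 (a * l ω)))) := by
  have hl : AEStronglyMeasurable l (volume : Measure Ω) := by
    have h1 : (fun ω => Real.exp (Real.log (l ω))) =ᵐ[(volume : Measure Ω)] l :=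
      hpos.mono fun ω h => Real.exp_log h
    exact (Real.continuous_exp.comp_aestronglyMeasurable hint.1).congr h1
  set bnd : Ω → ℝ := fun ω => 2 * |Real.log (l ω)| + Real.log 2 with hbnd
  have hbnd_int : Integrable bnd := (hint.abs.const_mul 2).add (integrable_const _)
  have hbound : ∀ ρ : ℝ, 1 ≤ ρ →
      ∀ᵐ ω ∂(volume : Measure Ω), |Real.log (1/ρ + l ω)| ≤ bnd ω := by
    intro ρ hρ
    filter_upwards [hpos] with ω h
    have hρ0 : (0:ℝ) < ρ := lt_of_lt_of_le one_pos hρ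
    have h1 : 0 < 1/ρ := by positivity
    have h2 : 1/ρ ≤ 1 := by rw [div_le_one hρ0]; exact hρ
    have hlow : Real.log (l ω) ≤ Real.log (1/ρ + l ω) :=
      Real.log_le_log h (by linarith)
    have hup : Real.log (1/ρ + l ω) ≤ Real.log 2 + |Real.log (l ω)| := by
      have h3 : Real.log (1/ρ + l ω) ≤ Real.log (1 + l ω) :=
        Real.log_le_log (by linarith) (by linarith)
      rcases le_or_gt (l ω) 1 with hc | hc
      · have h4 : Real.log (1 + l ω) ≤ Real.log 2 :=
          Real.log_le_log (by linarith) (by linarith)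
        have h5 := abs_nonneg (Real.log (l ω)); linarith
      · have h4 : Real.log (1 + l ω) ≤ Real.log (2 * l ω) :=
          Real.log_le_log (by linarith) (by linarith)
        rw [Real.log_mul two_ne_zero (ne_of_gt h)] at h4
        have h5 := le_abs_self (Real.log (l ω)); linarith
    have habs := abs_nonneg (Real.log (l ω))
    have hnegabs := neg_abs_le (Real.log (l ω))
    have hl2 : (0:ℝ) ≤ Real.log 2 := Real.log_nonneg one_le_two
    rw [abs_le]
    constructor
    · simp only [hbnd]; linarith
    · simp only [hbnd]; linarith
  have hg_meas : ∀ ρ : ℝ,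
      AEStronglyMeasurable (fun ω => Real.log (1/ρ + l ω)) (volume : Measure Ω) :=
    fun ρ => (Real.measurable_log.comp_aemeasurable
      (hl.aemeasurable.const_add (1/ρ))).aestronglyMeasurable
  have hg_int : ∀ ρ : ℝ, 1 ≤ ρ → Integrable (fun ω => Real.log (1/ρ + l ω)) :=
    fun ρ hρ => Integrable.mono' hbnd_int (hg_meas ρ) (hbound ρ hρ)
  have hmain : Tendsto (fun ρ : ℝ => ∫ ω, Real.log (1/ρ + l ω)) atTop
      (nhds (∫ ω, Real.log (l ω))) := by
    apply tendsto_integral_filter_of_dominated_convergence bnd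
    · exact Eventually.of_forall hg_meas
    · exact (eventually_ge_atTop 1).mono hbound
    · exact hbnd_int
    · filter_upwards [hpos] with ω h
      have h1 : Tendsto (fun ρ : ℝ => 1/ρ + l ω) atTop (nhds (0 + l ω)) := by
        simpa only [one_div] using tendsto_inv_atTop_zero.add (tendsto_const_nhds (x := l ω))
      rw [zero_add] at h1
      exact ((Real.continuousAt_log h.ne').tendsto).comp h1
  have hpart1 : Tendsto (fun ρ : ℝ => (∫ ω, Real.log (1 + ρ * l ω)) - Real.log ρ)
      atTop (nhds (∫ ω, Real.log (l ω))) := by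
    apply hmain.congr'
    filter_upwards [eventually_ge_atTop (1:ℝ)] with ρ hρ
    have hρ0 : (0:ℝ) < ρ := lt_of_lt_of_le one_pos hρ
    have key : (∫ ω, Real.log (1 + ρ * l ω)) =
        ∫ ω, (Real.log ρ + Real.log (1/ρ + l ω)) := by
      apply integral_congr_ae
      filter_upwards [hpos] with ω h
      rw [← Real.log_mul hρ0.ne' (by positivity)]
      rw [mul_add, mul_one_div, div_self hρ0.ne']
    rw [key, integral_add (integrable_const _) (hg_int ρ hρ), integral_const,
      probReal_univ, smul_eq_mul, one_mul]
    ring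
  refine ⟨hpart1, fun a ha => ?_⟩
  have hcomp : Tendsto (fun ρ : ℝ => (∫ ω, Real.log (1 + (a * ρ) * l ω)) - Real.log (a * ρ))
      atTop (nhds (∫ ω, Real.log (l ω))) :=
    hpart1.comp (tendsto_id.const_mul_atTop ha)
  have h2 : Tendsto (fun ρ : ℝ => (∫ ω, Real.log (1 + a * ρ * l ω)) - Real.log ρ)
      atTop (nhds ((∫ ω, Real.log (l ω)) + Real.log a)) := by
    apply (hcomp.add_const (Real.log a)).congr'
    filter_upwards [eventually_gt_atTop (0:ℝ)] with ρ hρ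
    rw [Real.log_mul ha.ne' hρ.ne']
    ring
  have hval : (∫ ω, Real.logb 2 (a * l ω)) =
      ((∫ ω, Real.log (l ω)) + Real.log a) / Real.log 2 := by
    have key : (∫ ω, Real.logb 2 (a * l ω)) =
        ∫ ω, (Real.log a + Real.log (l ω)) / Real.log 2 := by
      apply integral_congr_ae
      filter_upwards [hpos] with ω h
      rw [Real.logb, Real.log_mul ha.ne' h.ne']
    rw [key, integral_div, integral_add (integrable_const _) hint, integral_const,
      probReal_univ, smul_eq_mul, one_mul]
    ring_nf
  have hfin := (h2.neg).div_const (Real.log 2)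
  rw [neg_div] at hfin
  rw [hval]
  apply hfin.congr'
  apply Eventually.of_forall
  intro ρ
  have hx : ((1:ℝ)/2 * ∫ ω, Real.logb 2 (1 + a * ρ * l ω)) / (1/2) =
      ∫ ω, Real.logb 2 (1 + a * ρ * l ω) := by ring
  have hy : (∫ ω, Real.logb 2 (1 + a * ρ * l ω)) =
      (∫ ω, Real.log (1 + a * ρ * l ω)) / Real.log 2 := by
    simp only [Real.logb]
    rw [integral_div]
  beta_reduce
  rw [hx, hy, Real.logb]
  ring
end
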